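/- (Wald/CACE identification.) Let A be a binary instrument with P(A=1) = p ∈ (0,1), independent of the pair of potential outcomes (Y₀, Y₁) and potential treatments (Z₀, Z₁), where Y = Y_{Z_A} with Z_A = A·Z₁ + (1-A)·Z₀, and exclusion holds so the observed outcome is Y = Z_A·Y₁ + (1-Z_A)·Y₀. Assume Z₁ ≥ Z₀ a.s. and E[Z₁ - Z₀] ≠ 0. Then E[Y | A=1] - E[Y | A=0] = E[(Y₁ - Y₀)(Z₁ - Z₀)], and hence (E[Y|A=1] - E[Y|A=0]) / (E[Z|A=1] - E[Z|A=0]) = E[Y₁ - Y₀ | Z₁ - Z₀ = 1]. -/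

import Mathlib

open MeasureTheory ProbabilityTheory

/-- Conditional expectation of `X` given an event `s`: `E[X | s] = (∫_s X dμ) / μ(s)`. -/
noncomputable def condExpEvent {Ω : Type*} [MeasurableSpace Ω] (μ : Measure Ω)
    (X : Ω → ℝ) (s : Set Ω) : ℝ :=
  (∫ ω in s, X ω ∂μ) / (μ s).toReal

lemma key_integral {Ω : Type*} [MeasurableSpace Ω] (μ : Measure Ω) [IsProbabilityMeasure μ]
    (A W : Ω → ℝ) (hA : Measurable A) (hW : AEStronglyMeasurable W μ)
    (c : ℝ) (hindep : IndepFun A W μ) :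
    ∫ ω in {ω | A ω = c}, W ω ∂μ = (μ {ω | A ω = c}).toReal * ∫ ω, W ω ∂μ := by
  have hs : MeasurableSet {ω | A ω = c} := hA (measurableSet_singleton c)
  have hψ : Measurable (Set.indicator ({c} : Set ℝ) (fun _ => (1:ℝ))) :=
    measurable_const.indicator (measurableSet_singleton c)
  have hcomp : (Set.indicator ({c} : Set ℝ) (fun _ => (1:ℝ))) ∘ A
      = Set.indicator {ω | A ω = c} (fun _ => (1:ℝ)) := by
    funext ω
    by_cases h : A ω = c <;> simp [Set.indicator, h]
  have hind : IndepFun ((Set.indicator ({c} : Set ℝ) (fun _ => (1:ℝ))) ∘ A) W μ :=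
    hindep.comp hψ measurable_id
  have hmul := hind.integral_fun_mul_eq_mul_integral ((hψ.comp hA).aestronglyMeasurable) hW
  have h1 : ∫ ω, ((Set.indicator ({c} : Set ℝ) (fun _ => (1:ℝ))) ∘ A) ω ∂μ
      = (μ {ω | A ω = c}).toReal := by
    rw [hcomp]
    simp [integral_indicator_const (1:ℝ) hs, Measure.real]
  have h2 : ∫ ω in {ω | A ω = c}, W ω ∂μ
      = ∫ ω, ((Set.indicator ({c} : Set ℝ) (fun _ => (1:ℝ))) ∘ A) ω * W ω ∂μ := by
    rw [hcomp, ← integral_indicator hs]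
    congr 1
    funext ω
    by_cases h : ω ∈ {ω | A ω = c} <;> simp [Set.indicator, h]
  rw [h2, ← h1]; exact hmul

theorem stmt_6 {Ω : Type*} [MeasurableSpace Ω] (μ : Measure Ω) [IsProbabilityMeasure μ]
    (A Z₀ Z₁ Y₀ Y₁ : Ω → ℝ)
    (hA : Measurable A) (hZ₀ : Measurable Z₀) (hZ₁ : Measurable Z₁)
    (hY₀m : Measurable Y₀) (hY₁m : Measurable Y₁)
    (hY₀ : Integrable Y₀ μ) (hY₁ : Integrable Y₁ μ)
    (hAbin : ∀ ω, A ω = 0 ∨ A ω = 1)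
    (hbZ₀ : ∀ ω, Z₀ ω = 0 ∨ Z₀ ω = 1) (hbZ₁ : ∀ ω, Z₁ ω = 0 ∨ Z₁ ω = 1)
    (hp : 0 < (μ {ω | A ω = 1}).toReal ∧ (μ {ω | A ω = 1}).toReal < 1)
    (hindep : IndepFun A (fun ω => (Y₀ ω, Y₁ ω, Z₀ ω, Z₁ ω)) μ)
    (hmono : ∀ᵐ ω ∂μ, Z₀ ω ≤ Z₁ ω)
    (hFS : (∫ ω, (Z₁ ω - Z₀ ω) ∂μ) ≠ 0)
    (Z Y : Ω → ℝ)
    (hZ : Z = fun ω => A ω * Z₁ ω + (1 - A ω) * Z₀ ω)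
    (hY : Y = fun ω => Z ω * Y₁ ω + (1 - Z ω) * Y₀ ω) :
    condExpEvent μ Y {ω | A ω = 1} - condExpEvent μ Y {ω | A ω = 0} =
      ∫ ω, (Y₁ ω - Y₀ ω) * (Z₁ ω - Z₀ ω) ∂μ ∧
    (condExpEvent μ Y {ω | A ω = 1} - condExpEvent μ Y {ω | A ω = 0}) /
        (condExpEvent μ Z {ω | A ω = 1} - condExpEvent μ Z {ω | A ω = 0}) =
      condExpEvent μ (fun ω => Y₁ ω - Y₀ ω) {ω | Z₁ ω - Z₀ ω = 1} := by
  -- notation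
  set p : ℝ := (μ {ω | A ω = 1}).toReal with hpdef
  have hs1 : MeasurableSet {ω | A ω = 1} := hA (measurableSet_singleton 1)
  have hq : (μ {ω | A ω = 0}).toReal = 1 - p := by
    have hcompl : {ω | A ω = 0} = {ω | A ω = 1}ᶜ := by
      ext ω
      rcases hAbin ω with h | h <;> simp [h]
    have hadd : μ {ω | A ω = 1} + μ {ω | A ω = 0} = 1 := by
      rw [hcompl, measure_add_measure_compl hs1, measure_univ]
    have := congrArg ENNReal.toReal hadd
    rw [ENNReal.toReal_add (measure_ne_top μ _) (measure_ne_top μ _)] at this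
    simp only [ENNReal.toReal_one] at this
    rw [hpdef]
    linarith
  have hp0 : p ≠ 0 := ne_of_gt hp.1
  have hq0 : (μ {ω | A ω = 0}).toReal ≠ 0 := by
    rw [hq]; linarith [hp.2]
  -- the key "response" functions
  set g₁ : Ω → ℝ := fun ω => Z₁ ω * Y₁ ω + (1 - Z₁ ω) * Y₀ ω with hg₁def
  set g₀ : Ω → ℝ := fun ω => Z₀ ω * Y₁ ω + (1 - Z₀ ω) * Y₀ ω with hg₀def
  have hg₁m : Measurable g₁ := (hZ₁.mul hY₁m).add ((measurable_const.sub hZ₁).mul hY₀m)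
  have hg₀m : Measurable g₀ := (hZ₀.mul hY₁m).add ((measurable_const.sub hZ₀).mul hY₀m)
  have hg₁i : Integrable g₁ μ := by
    refine (hY₀.norm.add hY₁.norm).mono' hg₁m.aestronglyMeasurable ?_
    filter_upwards with ω
    rcases hbZ₁ ω with h | h <;>
      simp [hg₁def, h, Real.norm_eq_abs, abs_nonneg, le_add_of_nonneg_left,
        le_add_of_nonneg_right]
  have hg₀i : Integrable g₀ μ := by
    refine (hY₀.norm.add hY₁.norm).mono' hg₀m.aestronglyMeasurable ?_
    filter_upwards with ω
    rcases hbZ₀ ω with h | h <;>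
      simp [hg₀def, h, Real.norm_eq_abs, abs_nonneg, le_add_of_nonneg_left,
        le_add_of_nonneg_right]
  have hZ₁i : Integrable Z₁ μ := by
    refine (integrable_const (1:ℝ)).mono' hZ₁.aestronglyMeasurable ?_
    filter_upwards with ω
    rcases hbZ₁ ω with h | h <;> simp [h]
  have hZ₀i : Integrable Z₀ μ := by
    refine (integrable_const (1:ℝ)).mono' hZ₀.aestronglyMeasurable ?_
    filter_upwards with ω
    rcases hbZ₀ ω with h | h <;> simp [h]
  -- independence for the composites
  have hquadm : Measurable (fun ω => (Y₀ ω, Y₁ ω, Z₀ ω, Z₁ ω)) :=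
    hY₀m.prodMk (hY₁m.prodMk (hZ₀.prodMk hZ₁))
  have hindg₁ : IndepFun A g₁ μ := by
    have hφ : Measurable (fun q : ℝ × ℝ × ℝ × ℝ => q.2.2.2 * q.2.1 + (1 - q.2.2.2) * q.1) := by
      fun_prop
    exact hindep.comp measurable_id hφ
  have hindg₀ : IndepFun A g₀ μ := by
    have hφ : Measurable (fun q : ℝ × ℝ × ℝ × ℝ => q.2.2.1 * q.2.1 + (1 - q.2.2.1) * q.1) := by
      fun_prop
    exact hindep.comp measurable_id hφ
  have hindZ₁ : IndepFun A Z₁ μ := by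
    have hφ : Measurable (fun q : ℝ × ℝ × ℝ × ℝ => q.2.2.2) := by fun_prop
    exact hindep.comp measurable_id hφ
  have hindZ₀ : IndepFun A Z₀ μ := by
    have hφ : Measurable (fun q : ℝ × ℝ × ℝ × ℝ => q.2.2.1) := by fun_prop
    exact hindep.comp measurable_id hφ
  have hs0 : MeasurableSet {ω | A ω = 0} := hA (measurableSet_singleton 0)
  -- conditional expectations of Y
  have hY1 : condExpEvent μ Y {ω | A ω = 1} = ∫ ω, g₁ ω ∂μ := by
    unfold condExpEvent
    have heq : ∫ ω in {ω | A ω = 1}, Y ω ∂μ = ∫ ω in {ω | A ω = 1}, g₁ ω ∂μ := by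
      refine setIntegral_congr_fun hs1 fun ω hω => ?_
      have hω' : A ω = 1 := hω
      simp [hY, hZ, hg₁def, hω']
    rw [heq, key_integral μ A g₁ hA hg₁m.aestronglyMeasurable 1 hindg₁]
    exact mul_div_cancel_left₀ _ hp0
  have hY0 : condExpEvent μ Y {ω | A ω = 0} = ∫ ω, g₀ ω ∂μ := by
    unfold condExpEvent
    have heq : ∫ ω in {ω | A ω = 0}, Y ω ∂μ = ∫ ω in {ω | A ω = 0}, g₀ ω ∂μ := by
      refine setIntegral_congr_fun hs0 fun ω hω => ?_
      have hω' : A ω = 0 := hω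
      simp [hY, hZ, hg₀def, hω']
    rw [heq, key_integral μ A g₀ hA hg₀m.aestronglyMeasurable 0 hindg₀]
    exact mul_div_cancel_left₀ _ hq0
  have hZc1 : condExpEvent μ Z {ω | A ω = 1} = ∫ ω, Z₁ ω ∂μ := by
    unfold condExpEvent
    have heq : ∫ ω in {ω | A ω = 1}, Z ω ∂μ = ∫ ω in {ω | A ω = 1}, Z₁ ω ∂μ := by
      refine setIntegral_congr_fun hs1 fun ω hω => ?_
      have hω' : A ω = 1 := hω
      simp [hZ, hω']
    rw [heq, key_integral μ A Z₁ hA hZ₁.aestronglyMeasurable 1 hindZ₁]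
    exact mul_div_cancel_left₀ _ hp0
  have hZc0 : condExpEvent μ Z {ω | A ω = 0} = ∫ ω, Z₀ ω ∂μ := by
    unfold condExpEvent
    have heq : ∫ ω in {ω | A ω = 0}, Z ω ∂μ = ∫ ω in {ω | A ω = 0}, Z₀ ω ∂μ := by
      refine setIntegral_congr_fun hs0 fun ω hω => ?_
      have hω' : A ω = 0 := hω
      simp [hZ, hω']
    rw [heq, key_integral μ A Z₀ hA hZ₀.aestronglyMeasurable 0 hindZ₀]
    exact mul_div_cancel_left₀ _ hq0
  -- numerator and denominator identities
  have hnum : (∫ ω, g₁ ω ∂μ) - (∫ ω, g₀ ω ∂μ) = ∫ ω, (Y₁ ω - Y₀ ω) * (Z₁ ω - Z₀ ω) ∂μ := by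
    rw [← integral_sub hg₁i hg₀i]
    congr 1
    funext ω
    simp only [hg₁def, hg₀def]
    ring
  have hden : (∫ ω, Z₁ ω ∂μ) - (∫ ω, Z₀ ω ∂μ) = ∫ ω, (Z₁ ω - Z₀ ω) ∂μ := by
    rw [← integral_sub hZ₁i hZ₀i]
  -- the complier event
  set s : Set Ω := {ω | Z₁ ω - Z₀ ω = 1} with hsdef
  have hsM : MeasurableSet s := (hZ₁.sub hZ₀) (measurableSet_singleton 1)
  have h01 : ∀ᵐ ω ∂μ, Z₁ ω - Z₀ ω = 0 ∨ Z₁ ω - Z₀ ω = 1 := by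
    filter_upwards [hmono] with ω h
    rcases hbZ₁ ω with h1 | h1 <;> rcases hbZ₀ ω with h0 | h0 <;>
      rw [h0, h1] at h ⊢ <;> norm_num at h <;> norm_num
  have hE1 : ∫ ω, (Z₁ ω - Z₀ ω) ∂μ = (μ s).toReal := by
    have : ∫ ω, (Z₁ ω - Z₀ ω) ∂μ = ∫ ω, Set.indicator s (fun _ => (1:ℝ)) ω ∂μ := by
      refine integral_congr_ae ?_
      filter_upwards [h01] with ω h
      rcases h with h | h <;> simp [Set.indicator, hsdef, h]
    rw [this, integral_indicator_const (1:ℝ) hsM, smul_eq_mul, mul_one]; rfl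
  have hE2 : ∫ ω, (Y₁ ω - Y₀ ω) * (Z₁ ω - Z₀ ω) ∂μ = ∫ ω in s, (Y₁ ω - Y₀ ω) ∂μ := by
    rw [← integral_indicator hsM]
    refine integral_congr_ae ?_
    filter_upwards [h01] with ω h
    rcases h with h | h <;> simp [Set.indicator, hsdef, h]
  have hμs : (μ s).toReal ≠ 0 := hE1 ▸ hFS
  constructor
  · rw [hY1, hY0]
    exact hnum
  · rw [hY1, hY0, hZc1, hZc0, hnum, hden, hE1, hE2]
    rfl
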